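/- Let p ≥ K and let s : {1,…,p} → {1,…,K} be a parent map with s(j) = j for every j ∈ {1,…,K}. Let (s, θ, ν) and (s, θ, ν̄) be two valid BLESS parameter sets with the same parent map s and the same conditional probability tables θ. If their joint probability mass functions agree, P(y = c | s, θ, ν) = P(y = c | s, θ, ν̄) for every c ∈ {1,…,d}^p, then ν = ν̄. -/

import Mathlib

open Finset

/-- Joint probability mass function of the observed vector `c : Fin p → Fin d` under the
BLESS model with parent map `s`, conditional probability tables `θ` (where `θ j c x` is
`θ^{(j)}_{c|x}`), and latent proportion vector `ν`. -/
def blessPMF {K p d : ℕ} (s : Fin p → Fin K) (θ : Fin p → Fin d → Bool → ℝ)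
    (ν : (Fin K → Bool) → ℝ) (c : Fin p → Fin d) : ℝ :=
  ∑ α : Fin K → Bool, ν α * ∏ j, θ j (c j) (α (s j))

/-- Validity of a BLESS parameter set `(θ, ν)`: all conditional probabilities strictly
between 0 and 1, columns of each conditional probability table summing to one, the
monotonicity constraint `θ^{(j)}_{c|1} > θ^{(j)}_{c|0}` for every non-last category `c`,
strictly positive proportions summing to one. -/
structure BlessValid {K p d : ℕ} (θ : Fin p → Fin d → Bool → ℝ)
    (ν : (Fin K → Bool) → ℝ) : Prop where
  theta_pos : ∀ j c x, 0 < θ j c x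
  theta_lt_one : ∀ j c x, θ j c x < 1
  theta_sum : ∀ j x, ∑ c, θ j c x = 1
  theta_mono : ∀ j (c : Fin d), (c : ℕ) + 1 < d → θ j c false < θ j c true
  nu_pos : ∀ α, 0 < ν α
  nu_sum : ∑ α, ν α = 1

/-- Summation over tuples `Fin (n+1) → Bool` splits along the first coordinate. -/
lemma bless_sum_cons {n : ℕ} (F : (Fin (n + 1) → Bool) → ℝ) :
    ∑ α : Fin (n + 1) → Bool, F α
      = ∑ β : Fin n → Bool, (F (Fin.cons true β) + F (Fin.cons false β)) := by
  rw [← (Fin.consEquiv (fun _ : Fin (n+1) => Bool)).sum_comp F]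
  rw [Fintype.sum_prod_type]
  rw [Fintype.sum_bool]
  rw [← Finset.sum_add_distrib]
  rfl

/-- Key linear-independence lemma: tensor products of the vectors `(1,1)` and
`(w k false, w k true)` span, so a vanishing linear combination is trivial. -/
lemma bless_key : ∀ (K : ℕ) (w : Fin K → Bool → ℝ),
    (∀ k, w k false ≠ w k true) →
    ∀ g : (Fin K → Bool) → ℝ,
    (∀ c : Fin K → Bool,
      ∑ α : Fin K → Bool, g α * ∏ k, (if c k then w k (α k) else 1) = 0) →
    ∀ α, g α = 0 := by
  intro K
  induction K with
  | zero =>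
    intro w hw g hg α
    have h := hg α
    rw [Fintype.sum_unique] at h
    simpa [Unique.eq_default α] using h
  | succ n ih =>
    intro w hw g hg α
    have hcb : ∀ (cb : Bool) (β : Fin n → Bool),
        (if cb then w 0 true else 1) * g (Fin.cons true β)
          + (if cb then w 0 false else 1) * g (Fin.cons false β) = 0 := by
      intro cb
      have hyp : ∀ c' : Fin n → Bool,
          ∑ β : Fin n → Bool,
            ((if cb then w 0 true else 1) * g (Fin.cons true β)
              + (if cb then w 0 false else 1) * g (Fin.cons false β))
              * ∏ k : Fin n, (if c' k then w k.succ (β k) else 1) = 0 := by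
        intro c'
        have H := hg (Fin.cons cb c')
        rw [bless_sum_cons] at H
        rw [← H]
        refine Finset.sum_congr rfl fun β _ => ?_
        have hprod : ∀ b : Bool,
            ∏ k : Fin (n+1), (if (Fin.cons cb c' : Fin (n+1) → Bool) k then w k ((Fin.cons b β : Fin (n+1) → Bool) k) else 1)
              = (if cb then w 0 b else 1) * ∏ k : Fin n, (if c' k then w k.succ (β k) else 1) := by
          intro b
          rw [Fin.prod_univ_succ]
          simp [Fin.cons_zero, Fin.cons_succ]
        rw [hprod true, hprod false]
        ring
      exact ih (fun k => w k.succ) (fun k => hw k.succ) _ hyp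
    have h0 := hcb false
    have h1 := hcb true
    simp only [if_neg Bool.false_ne_true, Bool.false_eq_true, if_false, one_mul] at h0
    simp only [if_pos rfl, if_true] at h1
    have hzero : ∀ β, g (Fin.cons true β) = 0 ∧ g (Fin.cons false β) = 0 := by
      intro β
      have e0 := h0 β
      have e1 := h1 β
      have hfg : g (Fin.cons false β) = - g (Fin.cons true β) := by linarith
      rw [hfg] at e1
      have : (w 0 true - w 0 false) * g (Fin.cons true β) = 0 := by ring_nf; linarith
      have hne : w 0 true - w 0 false ≠ 0 := sub_ne_zero.mpr (hw 0).symm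
      have ht : g (Fin.cons true β) = 0 := by
        rcases mul_eq_zero.mp this with h | h
        · exact absurd h hne
        · exact h
      exact ⟨ht, by rw [hfg, ht, neg_zero]⟩
    rw [← Fin.cons_self_tail α]
    cases hb : α 0
    · exact (hzero (Fin.tail α)).2
    · exact (hzero (Fin.tail α)).1

/-- if the parent map satisfies `s(j) = j` for `j ∈ {1,…,K}` and two valid
BLESS parameter sets share the same parent map and the same conditional probability
tables `θ`, then agreement of the joint distributions forces `ν = ν̄`. -/
theorem bless_nu_identifiable {K p d : ℕ} (hd : 2 ≤ d) (hp : K ≤ p)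
    (s : Fin p → Fin K) (hs : ∀ j : Fin K, s (Fin.castLE hp j) = j)
    (θ : Fin p → Fin d → Bool → ℝ) (ν νb : (Fin K → Bool) → ℝ)
    (h1 : BlessValid θ ν) (h2 : BlessValid θ νb)
    (heq : ∀ c, blessPMF s θ ν c = blessPMF s θ νb c) :
    ν = νb := by
  classical
  have hd0 : 0 < d := by omega
  set c0 : Fin d := ⟨0, hd0⟩ with hc0
  -- Step 1: generalized moment equations.
  have expand : ∀ (ρ : (Fin K → Bool) → ℝ) (u : Fin p → Fin d → ℝ),
      ∑ y : Fin p → Fin d, (∏ j, u j (y j)) * blessPMF s θ ρ y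
        = ∑ α : Fin K → Bool, ρ α * ∏ j, (∑ c : Fin d, u j c * θ j c (α (s j))) := by
    intro ρ u
    unfold blessPMF
    calc ∑ y : Fin p → Fin d, (∏ j, u j (y j)) * ∑ α : Fin K → Bool,
            ρ α * ∏ j, θ j (y j) (α (s j))
        = ∑ y : Fin p → Fin d, ∑ α : Fin K → Bool,
            ρ α * ∏ j, (u j (y j) * θ j (y j) (α (s j))) := by
          refine Finset.sum_congr rfl fun y _ => ?_
          rw [Finset.mul_sum]
          refine Finset.sum_congr rfl fun α _ => ?_
          rw [Finset.prod_mul_distrib]; ring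
      _ = ∑ α : Fin K → Bool, ∑ y : Fin p → Fin d,
            ρ α * ∏ j, (u j (y j) * θ j (y j) (α (s j))) := Finset.sum_comm
      _ = ∑ α : Fin K → Bool, ρ α * ∏ j, (∑ c : Fin d, u j c * θ j c (α (s j))) := by
          refine Finset.sum_congr rfl fun α _ => ?_
          rw [← Finset.mul_sum,
            Fintype.prod_sum (fun j cc => u j cc * θ j cc (α (s j)))]
  have moment : ∀ u : Fin p → Fin d → ℝ,
      ∑ α : Fin K → Bool, (ν α - νb α) * ∏ j, (∑ c : Fin d, u j c * θ j c (α (s j))) = 0 := by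
    intro u
    have h := congrArg (fun t => t) (rfl : (0:ℝ) = 0)
    have e1 := expand ν u
    have e2 := expand νb u
    have hsame : ∑ y : Fin p → Fin d, (∏ j, u j (y j)) * blessPMF s θ ν y
        = ∑ y : Fin p → Fin d, (∏ j, u j (y j)) * blessPMF s θ νb y :=
      Finset.sum_congr rfl fun y _ => by rw [heq y]
    rw [e1, e2] at hsame
    have : ∑ α : Fin K → Bool,
        ((ν α - νb α) * ∏ j, (∑ c : Fin d, u j c * θ j c (α (s j)))) =
        (∑ α : Fin K → Bool, ν α * ∏ j, (∑ c : Fin d, u j c * θ j c (α (s j))))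
          - ∑ α : Fin K → Bool, νb α * ∏ j, (∑ c : Fin d, u j c * θ j c (α (s j))) := by
      rw [← Finset.sum_sub_distrib]
      exact Finset.sum_congr rfl fun α _ => by ring
    rw [this, hsame, sub_self]
  -- Step 2: specialize to indicator weights.
  set w : Fin K → Bool → ℝ := fun k x => θ (Fin.castLE hp k) c0 x with hwdef
  have hw : ∀ k, w k false ≠ w k true := by
    intro k
    exact ne_of_lt (h1.theta_mono (Fin.castLE hp k) c0 (by show (0:ℕ) + 1 < d; omega))
  have hkey : ∀ c : Fin K → Bool,
      ∑ α : Fin K → Bool, (ν α - νb α) * ∏ k, (if c k then w k (α k) else 1) = 0 := by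
    intro c
    set P : Fin p → Prop := fun j => ∃ k : Fin K, c k = true ∧ Fin.castLE hp k = j with hP
    set u : Fin p → Fin d → ℝ :=
      fun j cc => if P j then (if cc = c0 then 1 else 0) else 1 with hu
    have hsum : ∀ (j : Fin p) (x : Bool),
        ∑ cc : Fin d, u j cc * θ j cc x = if P j then θ j c0 x else 1 := by
      intro j x
      by_cases hpj : P j
      · simp only [hu, if_pos hpj]
        simp [ite_mul]
      · simp only [hu, if_neg hpj]
        simpa using h1.theta_sum j x
    have hmom := moment u
    rw [← hmom]
    refine Finset.sum_congr rfl fun α _ => ?_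
    congr 1
    -- product over Fin p reduces to product over Fin K
    have hstep : ∀ j : Fin p, (∑ cc : Fin d, u j cc * θ j cc (α (s j)))
        = if P j then θ j c0 (α (s j)) else 1 := fun j => hsum j (α (s j))
    calc ∏ k : Fin K, (if c k then w k (α k) else 1)
        = ∏ k ∈ Finset.univ.filter (fun k => c k = true), w k (α k) := by
          rw [Finset.prod_filter]
      _ = ∏ j ∈ (Finset.univ.filter (fun k => c k = true)).image (Fin.castLE hp),
            θ j c0 (α (s j)) := by
          rw [Finset.prod_image (fun a _ b _ h => Fin.castLE_injective hp h)]
          refine Finset.prod_congr rfl fun k _ => ?_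
          rw [hs k]
      _ = ∏ j ∈ Finset.univ.filter P, θ j c0 (α (s j)) := by
          congr 1
          ext j
          simp only [Finset.mem_image, Finset.mem_filter, Finset.mem_univ, true_and, hP]
      _ = ∏ j : Fin p, (if P j then θ j c0 (α (s j)) else 1) := by
          rw [Finset.prod_filter]
      _ = ∏ j : Fin p, (∑ cc : Fin d, u j cc * θ j cc (α (s j))) := by
          exact Finset.prod_congr rfl fun j _ => (hstep j).symm
  have hzero := bless_key K w hw (fun α => ν α - νb α) hkey
  funext α
  exact sub_eq_zero.mp (hzero α)
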